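/- K_TBB(2) = 5: among all Turing machines with at most 2 states that halt on the all-zero tape with a computed word containing exactly BB(2) = 4 ones, the minimum number of steps taken before halting is exactly 5. -/

import Mathlib

/-- Head movement directions. -/
inductive Dir : Type
  | left | stay | right

/-- Displacement of the head for each direction. -/
def Dir.move : Dir → ℤ
  | .left => -1
  | .stay => 0
  | .right => 1

/-- A configuration of a Turing machine with state type `Q`: current state,
head position and the two-way infinite binary tape. -/
structure Cfg (Q : Type) where
  state : Q
  head : ℤ
  tape : ℤ → Bool

/-- One step of the machine with partial transition function `f`
(`none` if the machine halts, i.e. `f` is undefined on the current pair). -/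
def stepTM {Q : Type} (f : Q × Bool → Option (Q × Bool × Dir)) (c : Cfg Q) :
    Option (Cfg Q) :=
  (f (c.state, c.tape c.head)).map fun qbd =>
    ⟨qbd.1, c.head + qbd.2.2.move, Function.update c.tape c.head qbd.2.1⟩

/-- Running `t` steps (returns `none` if the machine halts strictly before `t` steps). -/
def stepsTM {Q : Type} (f : Q × Bool → Option (Q × Bool × Dir)) :
    ℕ → Cfg Q → Option (Cfg Q)
  | 0, c => some c
  | t + 1, c => (stepTM f c).bind (stepsTM f t)

/-- Initial configuration: initial state `q0`, head at `0`, all-zero tape. -/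
def initCfg {Q : Type} (q0 : Q) : Cfg Q := ⟨q0, 0, fun _ => false⟩

/-- The machine is halted in configuration `c`: the transition function is
undefined on the current (state, symbol) pair. -/
def Halted {Q : Type} (f : Q × Bool → Option (Q × Bool × Dir)) (c : Cfg Q) : Prop :=
  f (c.state, c.tape c.head) = none

/-- `w` is the tape contents from the leftmost 1 to the rightmost 1
(the empty word if the tape contains no 1). -/
def TapeWord (tape : ℤ → Bool) (w : List Bool) : Prop :=
  ∃ i : ℤ,
    (∀ k : ℕ, k < w.length → w.getD k false = tape (i + k)) ∧
    (∀ j : ℤ, tape j = true → i ≤ j ∧ j < i + w.length) ∧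
    (w ≠ [] → w.getD 0 false = true ∧ w.getLastD false = true)

/-- The machine with transition function `f` and initial state `q0`, started on
the all-zero tape, halts after exactly `t` steps computing the word `w`. -/
def Computes {Q : Type} (f : Q × Bool → Option (Q × Bool × Dir)) (q0 : Q)
    (w : List Bool) (t : ℕ) : Prop :=
  ∃ c : Cfg Q, stepsTM f t (initCfg q0) = some c ∧ Halted f c ∧ TapeWord c.tape w

/- ### Auxiliary material -/

def Dir.toFin : Dir → Fin 3
  | .left => 0
  | .stay => 1
  | .right => 2

lemma Dir.toFin_inj : Function.Injective Dir.toFin := by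
  intro a b h
  cases a <;> cases b <;> simp [Dir.toFin] at h ⊢

instance : DecidableEq Dir := fun a b => decidable_of_iff _ Dir.toFin_inj.eq_iff

instance : Fintype Dir :=
  Fintype.ofList [Dir.left, Dir.stay, Dir.right] (by intro x; cases x <;> simp)

abbrev Rule := Option (Fin 2 × Bool × Dir)

/-- Build a transition function from its four values. -/
def mkF (a b c d : Rule) : Fin 2 × Bool → Rule :=
  fun x => if x.1 = 0 then (if x.2 then b else a) else (if x.2 then d else c)

lemma eq_mkF (f : Fin 2 × Bool → Rule) :
    f = mkF (f (0, false)) (f (0, true)) (f (1, false)) (f (1, true)) := by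
  funext x
  obtain ⟨q, s⟩ := x
  fin_cases q <;> cases s <;> simp [mkF]

/-- The window of tape positions reachable within 4 steps. -/
def window : Finset ℤ := {-4, -3, -2, -1, 0, 1, 2, 3, 4}

lemma mem_window {j : ℤ} (h : |j| ≤ 4) : j ∈ window := by
  rw [abs_le] at h
  simp only [window, Finset.mem_insert, Finset.mem_singleton]
  omega

/-- Number of ones in the window. -/
def onesIn (tape : ℤ → Bool) : ℕ := (window.filter (fun j => tape j = true)).card

/-- A machine is "bad" if it halts after exactly 4 steps with 4 ones. -/
def bad (f : Fin 2 × Bool → Rule) : Bool :=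
  match stepsTM f 4 (initCfg (0 : Fin 2)) with
  | none => false
  | some c => (f (c.state, c.tape c.head)).isNone && (onesIn c.tape == 4)

set_option maxRecDepth 100000 in
set_option maxHeartbeats 4000000 in
theorem key : ∀ a b c d : Rule, bad (mkF a b c d) = false := by decide

/-- Invariant after `n` steps: head within `n` of origin, and the true cells are
contained in a finite set of size at most `n` whose elements are within `n`. -/
def TMInv (n : ℕ) (c : Cfg (Fin 2)) : Prop :=
  |c.head| ≤ (n : ℤ) ∧
    ∃ F : Finset ℤ, F.card ≤ n ∧ (∀ j ∈ F, |j| ≤ (n : ℤ)) ∧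
      ∀ j, c.tape j = true → j ∈ F

lemma inv_init : TMInv 0 (initCfg (0 : Fin 2)) := by
  refine ⟨by simp [initCfg], ∅, by simp, by simp, ?_⟩
  intro j hj
  simp [initCfg] at hj

lemma inv_step {f : Fin 2 × Bool → Rule} {c c' : Cfg (Fin 2)} {n : ℕ}
    (h : stepTM f c = some c') (hc : TMInv n c) : TMInv (n + 1) c' := by
  obtain ⟨hhead, F, hcard, hF, htape⟩ := hc
  rw [stepTM] at h
  cases hf : f (c.state, c.tape c.head) with
  | none => simp [hf] at h
  | some qbd =>
    simp only [hf, Option.map_some, Option.some.injEq] at h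
    subst h
    have hmove : |qbd.2.2.move| ≤ 1 := by cases qbd.2.2 <;> simp [Dir.move]
    rw [abs_le] at hhead hmove
    refine ⟨?_, insert c.head F, ?_, ?_, ?_⟩
    · show |c.head + qbd.2.2.move| ≤ ((n + 1 : ℕ) : ℤ)
      rw [abs_le]
      push_cast
      omega
    · calc (insert c.head F).card ≤ F.card + 1 := Finset.card_insert_le _ _
        _ ≤ n + 1 := by omega
    · intro j hj
      rw [abs_le]
      rcases Finset.mem_insert.mp hj with h | h
      · subst h; push_cast; omega
      · have := abs_le.mp (hF j h); push_cast; omega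
    · intro j hj
      replace hj : Function.update c.tape c.head qbd.2.1 j = true := hj
      rcases eq_or_ne j c.head with rfl | hne
      · exact Finset.mem_insert_self _ _
      · rw [Function.update_of_ne hne] at hj
        exact Finset.mem_insert_of_mem (htape j hj)

lemma inv_steps {f : Fin 2 × Bool → Rule} :
    ∀ (t : ℕ) (c c' : Cfg (Fin 2)) (n : ℕ),
      stepsTM f t c = some c' → TMInv n c → TMInv (n + t) c' := by
  intro t
  induction t with
  | zero =>
    intro c c' n h hc
    simp only [stepsTM, Option.some.injEq] at h
    subst h; simpa using hc
  | succ t ih =>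
    intro c c' n h hc
    rw [stepsTM] at h
    cases h1 : stepTM f c with
    | none => simp [h1] at h
    | some c1 =>
      rw [h1, Option.bind_some] at h
      have := ih c1 c' (n + 1) h (inv_step h1 hc)
      have heq : n + 1 + t = n + (t + 1) := by omega
      rwa [heq] at this

/-- Counting ones in a boolean word via indices. -/
lemma count_true_eq (w : List Bool) :
    w.count true =
      ((Finset.range w.length).filter (fun k => w.getD k false = true)).card := by
  induction w with
  | nil => simp
  | cons a w ih =>
    rw [List.count_cons]
    have hbij : ((Finset.range w.length).filter (fun k => w.getD k false = true)).card
        = ((Finset.Ico 1 (w.length + 1)).filter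
            (fun k => (a :: w).getD k false = true)).card := by
      refine Finset.card_bij' (fun k _ => k + 1) (fun k _ => k - 1) ?_ ?_ ?_ ?_
      · intro k hk
        simp only [Finset.mem_filter, Finset.mem_range] at hk
        simp only [Finset.mem_filter, Finset.mem_Ico]
        exact ⟨⟨by omega, by omega⟩, by simpa using hk.2⟩
      · intro k hk
        simp only [Finset.mem_filter, Finset.mem_Ico] at hk
        simp only [Finset.mem_filter, Finset.mem_range]
        obtain ⟨⟨h1, h2⟩, h3⟩ := hk
        obtain ⟨k', rfl⟩ : ∃ k', k = k' + 1 := ⟨k - 1, by omega⟩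
        rw [List.getD_cons_succ] at h3
        refine ⟨by omega, ?_⟩
        show w.getD (k' + 1 - 1) false = true
        simpa using h3
      · intro k _
        show k + 1 - 1 = k
        omega
      · intro k hk
        simp only [Finset.mem_filter, Finset.mem_Ico] at hk
        show k - 1 + 1 = k
        omega
    have hsplit : (Finset.range (w.length + 1)) =
        insert 0 (Finset.Ico 1 (w.length + 1)) := by
      ext k
      simp only [Finset.mem_range, Finset.mem_insert, Finset.mem_Ico]
      omega
    have hR : ((Finset.range (w.length + 1)).filter
        (fun k => (a :: w).getD k false = true)).card
        = (if a = true then 1 else 0) + w.count true := by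
      rw [hsplit, Finset.filter_insert]
      by_cases ha : a = true
      · rw [if_pos (by simpa using ha), if_pos ha,
          Finset.card_insert_of_notMem (by simp), ← hbij, ← ih]
        omega
      · rw [if_neg (by simpa using ha), if_neg ha, ← hbij, ← ih]
        omega
    rw [List.length_cons, hR]
    cases a <;> simp [List.count_cons] <;> omega

/-- If `TapeWord tape w` and all true cells are in the window, then the number of
true letters of `w` equals the number of ones in the window. -/
lemma count_eq_onesIn {tape : ℤ → Bool} {w : List Bool} (htw : TapeWord tape w)
    (hb : ∀ j, tape j = true → |j| ≤ (4 : ℤ)) :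
    onesIn tape = w.count true := by
  obtain ⟨i, h1, h2, _⟩ := htw
  rw [count_true_eq, onesIn]
  refine Finset.card_bij' (fun j _ => (j - i).toNat) (fun k _ => i + k) ?_ ?_ ?_ ?_
  · intro j hj
    simp only [Finset.mem_filter] at hj
    obtain ⟨_, hjt⟩ := hj
    obtain ⟨hij, hjlen⟩ := h2 j hjt
    simp only [Finset.mem_filter, Finset.mem_range]
    constructor
    · omega
    · have hk : ((j - i).toNat : ℤ) = j - i := by omega
      have hlt : (j - i).toNat < w.length := by omega
      rw [h1 _ hlt, hk]
      convert hjt using 2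
      omega
  · intro k hk
    simp only [Finset.mem_filter, Finset.mem_range] at hk
    obtain ⟨hklt, hkt⟩ := hk
    have htrue : tape (i + k) = true := by rw [← h1 _ hklt]; exact hkt
    simp only [Finset.mem_filter]
    exact ⟨mem_window (hb _ htrue), htrue⟩
  · intro j hj
    simp only [Finset.mem_filter] at hj
    obtain ⟨hij, _⟩ := h2 j hj.2
    show i + (((j - i).toNat : ℕ) : ℤ) = j
    omega
  · intro k _
    show (i + (k : ℤ) - i).toNat = k
    omega

/-- The witness machine: the 2-state busy beaver (with the halting transition
removed), which halts after 5 steps with 4 ones on the tape. -/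
def M : Fin 2 × Bool → Rule :=
  mkF (some (1, true, Dir.right)) (some (1, true, Dir.left))
      (some (0, true, Dir.left)) none

def tape5 : ℤ → Bool :=
  Function.update (Function.update (Function.update (Function.update
    (Function.update (fun _ => false) 0 true) 1 true) 0 true) (-1) true) (-2) true

lemma M_steps : stepsTM M 5 (initCfg (0 : Fin 2)) = some ⟨1, -1, tape5⟩ := by
  rfl

lemma tape5_eq (j : ℤ) : tape5 j = decide (-2 ≤ j ∧ j ≤ 1) := by
  rcases eq_or_ne j (-2) with rfl | h2
  · rfl
  rcases eq_or_ne j (-1) with rfl | h1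
  · rfl
  rcases eq_or_ne j 0 with rfl | h0
  · rfl
  rcases eq_or_ne j 1 with rfl | hp1
  · rfl
  show Function.update _ _ _ j = _
  rw [Function.update_of_ne h2, Function.update_of_ne h1,
    Function.update_of_ne h0, Function.update_of_ne hp1, Function.update_of_ne h0]
  symm
  simp only [decide_eq_false_iff_not]
  omega

/-- K_TBB(2) = 5: among all Turing machines with at most 2
states that halt on the all-zero tape with a computed word containing exactly
BB(2) = 4 ones, the minimum number of steps taken before halting is
exactly 5. -/
theorem min_running_time_busy_beaver_2 :
    IsLeast
      {t : ℕ |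
        ∃ (f : Fin 2 × Bool → Option (Fin 2 × Bool × Dir)) (w : List Bool),
          Computes f 0 w t ∧ w.count true = 4} 5 := by
  constructor
  · -- membership: the machine M halts after 5 steps with 4 ones
    refine ⟨M, [true, true, true, true], ⟨⟨1, -1, tape5⟩, M_steps, ?_, ?_⟩, by decide⟩
    · exact rfl
    · refine ⟨-2, ?_, ?_, ?_⟩
      · intro k hk
        simp only [List.length_cons, List.length_nil] at hk
        interval_cases k <;> decide
      · intro j hj
        replace hj : tape5 j = true := hj
        rw [tape5_eq] at hj
        simp only [decide_eq_true_eq] at hj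
        simp only [List.length_cons, List.length_nil]
        push_cast
        omega
      · intro _; exact ⟨rfl, rfl⟩
  · -- lower bound
    rintro t ⟨f, w, ⟨c, hsteps, hhalt, htw⟩, hcount⟩
    by_contra hlt
    push_neg at hlt
    have ht4 : t ≤ 4 := by omega
    -- invariant after t steps
    have hinv : TMInv t c := by
      have := inv_steps t (initCfg 0) c 0 hsteps inv_init
      simpa using this
    obtain ⟨_, F, hFcard, hFbound, hFtape⟩ := hinv
    have hbound : ∀ j, c.tape j = true → |j| ≤ (4 : ℤ) := by
      intro j hj
      have := hFbound j (hFtape j hj)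
      have : |j| ≤ (t : ℤ) := this
      have : (t : ℤ) ≤ 4 := by exact_mod_cast ht4
      omega
    -- number of ones is at most t
    have hcount_le : w.count true ≤ t := by
      obtain ⟨i, h1, h2, _⟩ := htw
      rw [count_true_eq]
      calc ((Finset.range w.length).filter (fun k => w.getD k false = true)).card
          ≤ F.card := by
            refine Finset.card_le_card_of_injOn (fun k : ℕ => i + (k : ℤ)) ?_ ?_
            · intro k hk
              simp only [Finset.mem_coe, Finset.mem_filter, Finset.mem_range] at hk
              apply hFtape
              rw [← h1 _ hk.1]
              exact hk.2
            · intro x _ y _ hxy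
              simpa using hxy
        _ ≤ t := hFcard
    have ht4' : t = 4 := by omega
    subst ht4'
    -- so the machine is "bad", contradicting `key`
    have hones : onesIn c.tape = 4 := by rw [count_eq_onesIn htw hbound, hcount]
    have hbad : bad f = true := by
      rw [bad, hsteps]
      simp only [Bool.and_eq_true, beq_iff_eq]
      exact ⟨by rw [Option.isNone_iff_eq_none]; exact hhalt, hones⟩
    rw [eq_mkF f, key] at hbad
    simp at hbad
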